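/- Let z₁, z₂ be unimodular complex numbers with arg z₁ ≤ arg z₂ (args in [0,2π)), and similarly z̃₁, z̃₂. If the diagonal matrices diag(z₁,z₂) and diag(z̃₁,z̃₂) are congruent, i.e., diag(z̃₁,z̃₂) = T diag(z₁,z₂) T* for some invertible 2×2 matrix T, then z̃₁ = z₁ and z̃₂ = z₂. -/

import Mathlib

open Matrix

/-- The argument of a complex number normalized to lie in `[0, 2π)`. -/
noncomputable def arg2pi (z : ℂ) : ℝ :=
  if 0 ≤ Complex.arg z then Complex.arg z else Complex.arg z + 2 * Real.pi

lemma arg2pi_inj {z w : ℂ} (hz : ‖z‖ = 1) (hw : ‖w‖ = 1)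
    (h : arg2pi z = arg2pi w) : z = w := by
  apply Complex.ext_norm_arg (hz.trans hw.symm)
  unfold arg2pi at h
  have hz1 := Complex.arg_le_pi z
  have hz2 := Complex.neg_pi_lt_arg z
  have hw1 := Complex.arg_le_pi w
  have hw2 := Complex.neg_pi_lt_arg w
  have hpi := Real.pi_pos
  split_ifs at h <;> linarith

/-- If `diag(z₁,z₂)` and `diag(z̃₁,z̃₂)` (unimodular entries, arguments in
`[0,2π)` in increasing order) are congruent via an invertible `T`,
then `z̃₁ = z₁` and `z̃₂ = z₂`. -/
theorem stmt18 (z1 z2 zt1 zt2 : ℂ)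
    (h1 : ‖z1‖ = 1) (h2 : ‖z2‖ = 1)
    (ht1 : ‖zt1‖ = 1) (ht2 : ‖zt2‖ = 1)
    (horder : arg2pi z1 ≤ arg2pi z2) (hordert : arg2pi zt1 ≤ arg2pi zt2)
    (T : Matrix (Fin 2) (Fin 2) ℂ) (hT : IsUnit T.det)
    (hcong : !![zt1, 0; 0, zt2] = T * !![z1, 0; 0, z2] * Tᴴ) :
    zt1 = z1 ∧ zt2 = z2 := by
  -- entry (0,0): the cone condition
  set α : ℝ := Complex.normSq (T 0 0) with hαdef
  set β : ℝ := Complex.normSq (T 0 1) with hβdef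
  have hα : 0 ≤ α := Complex.normSq_nonneg _
  have hβ : 0 ≤ β := Complex.normSq_nonneg _
  have e11 : zt1 = (α : ℂ) * z1 + (β : ℂ) * z2 := by
    have h := congrFun (congrFun hcong 0) 0
    simp [Matrix.mul_apply, Fin.sum_univ_two, Matrix.conjTranspose_apply] at h
    rw [h, hαdef, hβdef, Complex.normSq_eq_conj_mul_self, Complex.normSq_eq_conj_mul_self]
    ring
  set A : Matrix (Fin 2) (Fin 2) ℂ := !![z1, 0; 0, z2] with hA
  set B : Matrix (Fin 2) (Fin 2) ℂ := !![zt1, 0; 0, zt2] with hB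
  have nz1 : (Complex.normSq z1 : ℂ) = 1 := by rw [Complex.normSq_eq_norm_sq, h1]; norm_num
  have nz2 : (Complex.normSq z2 : ℂ) = 1 := by rw [Complex.normSq_eq_norm_sq, h2]; norm_num
  have nzt1 : (Complex.normSq zt1 : ℂ) = 1 := by rw [Complex.normSq_eq_norm_sq, ht1]; norm_num
  have nzt2 : (Complex.normSq zt2 : ℂ) = 1 := by rw [Complex.normSq_eq_norm_sq, ht2]; norm_num
  -- K1 : the product is preserved (via determinants)
  have hdet := congrArg Matrix.det hcong
  rw [Matrix.det_mul, Matrix.det_mul, Matrix.det_conjTranspose] at hdet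
  rw [hA, hB, Matrix.det_fin_two_of, Matrix.det_fin_two_of] at hdet
  have hdet' : zt1 * zt2 = (Complex.normSq T.det : ℂ) * (z1 * z2) := by
    rw [Complex.normSq_eq_conj_mul_self]
    rw [RCLike.star_def] at hdet
    linear_combination hdet
  have habs := congrArg (‖·‖) hdet'
  simp [ht1, ht2, h1, h2, Complex.norm_real] at habs
  have hns : (Complex.normSq T.det : ℂ) = 1 := by
    norm_cast
    rw [abs_of_nonneg (Complex.normSq_nonneg _)] at habs
    exact habs.symm
  rw [hns, one_mul] at hdet'
  -- K2 : the sum of squares is preserved (via the trace of the squared matrix)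
  have hAu : A * Aᴴ = 1 := by
    rw [hA]
    ext i j
    fin_cases i <;> fin_cases j <;>
      simp [Matrix.mul_apply, Fin.sum_univ_two, Matrix.conjTranspose_apply,
        Complex.mul_conj, nz1, nz2]
  have hBu : B * Bᴴ = 1 := by
    rw [hB]
    ext i j
    fin_cases i <;> fin_cases j <;>
      simp [Matrix.mul_apply, Fin.sum_univ_two, Matrix.conjTranspose_apply,
        Complex.mul_conj, nzt1, nzt2]
  have hAu' : Aᴴ * A = 1 := mul_eq_one_comm.mp hAu
  have hTH : IsUnit (Tᴴ).det := by
    rw [Matrix.det_conjTranspose]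
    exact hT.star
  have hT1 : T * T⁻¹ = 1 := Matrix.mul_nonsing_inv T hT
  have hT2 : T⁻¹ * T = 1 := Matrix.nonsing_inv_mul T hT
  have hTH1 : Tᴴ * (Tᴴ)⁻¹ = 1 := Matrix.mul_nonsing_inv _ hTH
  have hBH : Bᴴ = T * Aᴴ * Tᴴ := by
    rw [hcong]
    simp [Matrix.conjTranspose_mul, Matrix.mul_assoc]
  have hstep : B * T = (Tᴴ)⁻¹ * A := by
    have h0 : B * (T * Aᴴ * Tᴴ) = 1 := by rw [← hBH]; exact hBu
    have h1' : B * T * Aᴴ = (Tᴴ)⁻¹ := by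
      have h := congrArg (fun M => M * (Tᴴ)⁻¹) h0
      simp only [one_mul] at h
      rw [← h, Matrix.mul_assoc B (T * Aᴴ * Tᴴ), Matrix.mul_assoc (T * Aᴴ) Tᴴ,
        hTH1, Matrix.mul_one, ← Matrix.mul_assoc]
    calc B * T = B * T * (Aᴴ * A) := by rw [hAu', Matrix.mul_one]
      _ = (B * T * Aᴴ) * A := by noncomm_ring
      _ = (Tᴴ)⁻¹ * A := by rw [h1']
  have hstep2 : B * (Tᴴ)⁻¹ = T * A := by
    rw [hcong, Matrix.mul_assoc (T * A), hTH1, Matrix.mul_one]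
  have hB2 : B * B * T = T * (A * A) := by
    calc B * B * T = B * (B * T) := by noncomm_ring
      _ = B * ((Tᴴ)⁻¹ * A) := by rw [hstep]
      _ = (B * (Tᴴ)⁻¹) * A := by noncomm_ring
      _ = T * A * A := by rw [hstep2]
      _ = T * (A * A) := by noncomm_ring
  have htr : Matrix.trace (B * B) = Matrix.trace (A * A) := by
    calc Matrix.trace (B * B) = Matrix.trace ((B * B * T) * T⁻¹) := by
            rw [Matrix.mul_assoc (B * B) T T⁻¹, hT1, Matrix.mul_one]
      _ = Matrix.trace (T⁻¹ * (B * B * T)) := Matrix.trace_mul_comm _ _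
      _ = Matrix.trace (T⁻¹ * (T * (A * A))) := by rw [hB2]
      _ = Matrix.trace ((T⁻¹ * T) * (A * A)) := by rw [Matrix.mul_assoc]
      _ = Matrix.trace (A * A) := by rw [hT2, Matrix.one_mul]
  rw [hA, hB] at htr
  simp [Matrix.mul_apply, Matrix.trace_fin_two, Fin.sum_univ_two] at htr
  have htr2 : zt1 ^ 2 + zt2 ^ 2 = z1 ^ 2 + z2 ^ 2 := by linear_combination htr
  -- combine: sums and differences agree up to sign
  have hsum : zt1 + zt2 = z1 + z2 ∨ zt1 + zt2 = -(z1 + z2) := by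
    have h : (zt1 + zt2 - (z1 + z2)) * (zt1 + zt2 + (z1 + z2)) = 0 := by
      linear_combination htr2 + 2 * hdet'
    rcases mul_eq_zero.mp h with h | h
    · left; linear_combination h
    · right; linear_combination h
  have hdiff : zt1 - zt2 = z1 - z2 ∨ zt1 - zt2 = -(z1 - z2) := by
    have h : (zt1 - zt2 - (z1 - z2)) * (zt1 - zt2 + (z1 - z2)) = 0 := by
      linear_combination htr2 - 2 * hdet'
    rcases mul_eq_zero.mp h with h | h
    · left; linear_combination h
    · right; linear_combination h
  -- auxiliary facts for the sign elimination
  have hswap : zt1 = z2 → zt2 = z1 → z1 = z2 := by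
    intro hx hy
    apply arg2pi_inj h1 h2
    apply le_antisymm horder
    rw [hx, hy] at hordert
    exact hordert
  have hcone1 : zt1 = -z2 → z1 = -z2 := by
    intro hx
    have e : (α : ℂ) * z1 = -(((1 + β : ℝ) : ℂ) * z2) := by
      push_cast
      linear_combination hx - e11
    have habs2 := congrArg (‖·‖) e
    simp [h1, h2, Complex.norm_real] at habs2
    rw [show ((1:ℂ) + (β:ℝ)) = ((1 + β : ℝ) : ℂ) by push_cast; ring, Complex.norm_real, Real.norm_eq_abs,
      abs_of_nonneg (by linarith : (0:ℝ) ≤ 1 + β), abs_of_nonneg hα] at habs2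
    have hc : (α : ℂ) = ((1 + β : ℝ) : ℂ) := by exact_mod_cast habs2
    have hne : ((1 + β : ℝ) : ℂ) ≠ 0 := by
      simp only [ne_eq, Complex.ofReal_eq_zero]
      linarith
    have h5 : ((1 + β : ℝ) : ℂ) * z1 = ((1 + β : ℝ) : ℂ) * (-z2) := by
      linear_combination e - z1 * hc
    exact mul_left_cancel₀ hne h5
  have hcone2 : zt1 = -z1 → z2 = -z1 := by
    intro hx
    have e : (β : ℂ) * z2 = -(((1 + α : ℝ) : ℂ) * z1) := by
      push_cast
      linear_combination hx - e11
    have habs2 := congrArg (‖·‖) e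
    simp [h1, h2, Complex.norm_real] at habs2
    rw [show ((1:ℂ) + (α:ℝ)) = ((1 + α : ℝ) : ℂ) by push_cast; ring, Complex.norm_real, Real.norm_eq_abs,
      abs_of_nonneg (by linarith : (0:ℝ) ≤ 1 + α), abs_of_nonneg hβ] at habs2
    have hc : (β : ℂ) = ((1 + α : ℝ) : ℂ) := by exact_mod_cast habs2
    have hne : ((1 + α : ℝ) : ℂ) ≠ 0 := by
      simp only [ne_eq, Complex.ofReal_eq_zero]
      linarith
    have h5 : ((1 + α : ℝ) : ℂ) * z2 = ((1 + α : ℝ) : ℂ) * (-z1) := by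
      linear_combination e - z2 * hc
    exact mul_left_cancel₀ hne h5
  rcases hsum with hs | hs <;> rcases hdiff with hd | hd
  · exact ⟨by linear_combination (hs + hd) / 2, by linear_combination (hs - hd) / 2⟩
  · -- swap case: zt1 = z2, zt2 = z1
    have hx : zt1 = z2 := by linear_combination (hs + hd) / 2
    have hy : zt2 = z1 := by linear_combination (hs - hd) / 2
    have h12 := hswap hx hy
    exact ⟨by rw [hx, h12], by rw [hy, h12]⟩
  · -- zt1 = -z2, zt2 = -z1
    have hx : zt1 = -z2 := by linear_combination (hs + hd) / 2
    have hy : zt2 = -z1 := by linear_combination (hs - hd) / 2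
    have h12 := hcone1 hx
    exact ⟨by rw [hx, h12], by rw [hy]; linear_combination -h12⟩
  · -- zt1 = -z1, zt2 = -z2
    have hx : zt1 = -z1 := by linear_combination (hs + hd) / 2
    have hy : zt2 = -z2 := by linear_combination (hs - hd) / 2
    have h21 := hcone2 hx
    have hx' : zt1 = z2 := by rw [hx, h21]
    have hy' : zt2 = z1 := by rw [hy, h21]; ring
    have h12 := hswap hx' hy'
    exfalso
    have hz10 : z1 = 0 := by linear_combination (h12 + h21) / 2
    rw [hz10] at h1
    simp at h1
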